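/- Suppose k̃ : [0,A] → ℝ is continuous, nonnegative, with ∫₀^A k̃(a) da = 1, and suppose there exists ε > 0 such that with T := sup{a ∈ [0,A] : k̃(a) > 0} and S_ε := {a ∈ [0,T] : k̃(a) ≤ ε}, the Lebesgue measure satisfies |S_ε| < (2r)⁻¹ where r := (∫₀^A a k̃(a) da)⁻¹. Then for every λ ∈ [0, r⁻¹ε], ∫₀^A |k̃(a) - r·λ·∫_a^A k̃(s) ds| da ≤ 1 - λ(1 - 2r|S_ε|). -/

import Mathlib

open MeasureTheory intervalIntegral

set_option maxHeartbeats 1000000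

theorem stmt_7 (A ε : ℝ) (hA : 0 < A) (hε : 0 < ε) (ktil : ℝ → ℝ)
    (hkc : ContinuousOn ktil (Set.Icc 0 A))
    (hk0 : ∀ a ∈ Set.Icc 0 A, 0 ≤ ktil a)
    (hmass : (∫ a in (0:ℝ)..A, ktil a) = 1)
    (r T : ℝ)
    (hr : r = (∫ a in (0:ℝ)..A, a * ktil a)⁻¹)
    (hT : T = sSup {a ∈ Set.Icc (0:ℝ) A | 0 < ktil a})
    (S : Set ℝ)
    (hS : S = {a ∈ Set.Icc (0:ℝ) T | ktil a ≤ ε})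
    (hSmeas : (volume S).toReal < (2 * r)⁻¹) :
    ∀ lam ∈ Set.Icc (0:ℝ) (r⁻¹ * ε),
      (∫ a in (0:ℝ)..A, |ktil a - r * lam * ∫ s in a..A, ktil s|) ≤
        1 - lam * (1 - 2 * r * (volume S).toReal) := by
  intro lam hlam
  obtain ⟨hlam0, hlamε⟩ := hlam
  have htR : (0:ℝ) ≤ (volume S).toReal := ENNReal.toReal_nonneg
  have hrpos : 0 < r := by
    by_contra h
    push_neg at h
    have h2 : (2 * r)⁻¹ ≤ 0 := inv_nonpos.mpr (by linarith)
    linarith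
  -- clamped kernel
  set kt : ℝ → ℝ := fun a => ktil (max 0 (min A a)) with hktdef
  have hmap : ∀ x : ℝ, max 0 (min A x) ∈ Set.Icc 0 A := fun x =>
    ⟨le_max_left _ _, max_le hA.le (min_le_left _ _)⟩
  have hktc : Continuous kt :=
    hkc.comp_continuous (continuous_const.max (continuous_const.min continuous_id)) hmap
  have heq : ∀ a ∈ Set.Icc (0:ℝ) A, kt a = ktil a := by
    intro a ha
    simp only [hktdef]
    rw [min_eq_right ha.2, max_eq_right ha.1]
  have hkt0 : ∀ a, 0 ≤ kt a := fun a => hk0 _ (hmap a)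
  have hktI : ∀ a b : ℝ, IntervalIntegrable kt volume a b := fun a b =>
    hktc.intervalIntegrable a b
  set K : ℝ → ℝ := fun a => ∫ s in a..A, kt s with hKdef
  have hKsplit : ∀ a : ℝ, K a = (∫ s in (0:ℝ)..A, kt s) - ∫ s in (0:ℝ)..a, kt s := by
    intro a
    have h := integral_add_adjacent_intervals (hktI 0 a) (hktI a A)
    simp only [hKdef]
    linarith
  have hKderiv : ∀ a : ℝ, HasDerivAt K (-(kt a)) a := by
    intro a
    have h1 : HasDerivAt (fun u => ∫ s in (0:ℝ)..u, kt s) (kt a) a :=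
      integral_hasDerivAt_right (hktI 0 a)
        (hktc.stronglyMeasurableAtFilter volume _) hktc.continuousAt
    have h2 : HasDerivAt (fun u => (∫ s in (0:ℝ)..A, kt s) - ∫ s in (0:ℝ)..u, kt s)
        (0 - kt a) a := (hasDerivAt_const a _).sub h1
    have hfun : K = fun u => (∫ s in (0:ℝ)..A, kt s) - ∫ s in (0:ℝ)..u, kt s :=
      funext hKsplit
    rw [hfun]
    simpa using h2
  have hKcont : Continuous K := continuous_iff_continuousAt.mpr fun a => (hKderiv a).continuousAt
  have hKnn : ∀ a ∈ Set.Icc (0:ℝ) A, 0 ≤ K a := by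
    intro a ha
    exact intervalIntegral.integral_nonneg ha.2 fun u _ => hkt0 u
  have hEqO : Set.EqOn kt ktil (Set.uIcc 0 A) := by
    rw [Set.uIcc_of_le hA.le]; exact fun a ha => heq a ha
  have hmass' : (∫ a in (0:ℝ)..A, kt a) = 1 := (integral_congr hEqO).trans hmass
  have hK1 : ∀ a ∈ Set.Icc (0:ℝ) A, K a ≤ 1 := by
    intro a ha
    have h0a : 0 ≤ ∫ s in (0:ℝ)..a, kt s :=
      intervalIntegral.integral_nonneg ha.1 fun u _ => hkt0 u
    rw [hKsplit a, hmass']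
    linarith
  set M : ℝ := ∫ a in (0:ℝ)..A, a * kt a with hMdef
  have hMkt : (∫ a in (0:ℝ)..A, a * ktil a) = M := by
    apply integral_congr
    intro a ha
    show a * ktil a = a * kt a
    rw [hEqO ha]
  -- integration by parts : ∫ K = M
  have hIBP := integral_mul_deriv_eq_deriv_mul
    (u := fun y : ℝ => y) (u' := fun _ : ℝ => (1:ℝ)) (v := K) (v' := fun x => -(kt x))
    (a := (0:ℝ)) (b := A)
    (fun x _ => hasDerivAt_id x) (fun x _ => hKderiv x)
    intervalIntegrable_const (hktc.neg.intervalIntegrable 0 A)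
  have hKA : K A = 0 := by simp [hKdef]
  have hKM : (∫ x in (0:ℝ)..A, K x) = M := by
    have h1 : (∫ x in (0:ℝ)..A, x * -(kt x)) = -M := by
      rw [hMdef, ← intervalIntegral.integral_neg]
      apply integral_congr
      intro x _
      ring
    have h2 : (∫ x in (0:ℝ)..A, (1:ℝ) * K x) = ∫ x in (0:ℝ)..A, K x := by
      apply integral_congr; intro x _; ring
    rw [h1, hKA, h2] at hIBP
    simp only [mul_zero, zero_mul] at hIBP
    linarith
  have hrM : r = M⁻¹ := by rw [hr, hMkt]
  have hM0 : 0 < M := inv_pos.mp (hrM ▸ hrpos)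
  have hrM1 : r * M = 1 := by rw [hrM]; exact inv_mul_cancel₀ hM0.ne'
  set c : ℝ := r * lam with hcdef
  have hc0 : 0 ≤ c := mul_nonneg hrpos.le hlam0
  have hcε : c ≤ ε := by
    have := mul_le_mul_of_nonneg_left hlamε hrpos.le
    rwa [← mul_assoc, mul_inv_cancel₀ hrpos.ne', one_mul] at this
  set f : ℝ → ℝ := fun a => kt a - c * K a with hfdef
  have hfc : Continuous f := hktc.sub (continuous_const.mul hKcont)
  -- rewrite LHS
  have hLHS : (∫ a in (0:ℝ)..A, |ktil a - r * lam * ∫ s in a..A, ktil s|)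
      = ∫ a in (0:ℝ)..A, |f a| := by
    apply integral_congr
    intro a ha
    rw [Set.uIcc_of_le hA.le] at ha
    show |ktil a - r * lam * ∫ s in a..A, ktil s| = |f a|
    have hinner : (∫ s in a..A, ktil s) = K a := by
      apply integral_congr
      intro s hs
      rw [Set.uIcc_of_le ha.2] at hs
      exact (heq s ⟨le_trans ha.1 hs.1, hs.2⟩).symm
    rw [hinner, ← heq a ha, hfdef, hcdef]
  -- T set facts
  have hktilI : IntervalIntegrable ktil volume 0 A := by
    apply ContinuousOn.intervalIntegrable
    rwa [Set.uIcc_of_le hA.le]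
  have hne : {a ∈ Set.Icc (0:ℝ) A | 0 < ktil a}.Nonempty := by
    by_contra h
    rw [Set.not_nonempty_iff_eq_empty] at h
    have hle : (∫ a in (0:ℝ)..A, ktil a) ≤ ∫ a in (0:ℝ)..A, (0:ℝ) := by
      apply intervalIntegral.integral_mono_on hA.le hktilI intervalIntegrable_const
      intro x hx
      by_contra hpos
      push_neg at hpos
      have : x ∈ {a ∈ Set.Icc (0:ℝ) A | 0 < ktil a} := ⟨hx, hpos⟩
      rw [h] at this
      exact this
    rw [hmass] at hle
    simp at hle
    linarith
  have hbdd : BddAbove {a ∈ Set.Icc (0:ℝ) A | 0 < ktil a} := ⟨A, fun x hx => hx.1.2⟩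
  have hTA : T ≤ A := by rw [hT]; exact csSup_le hne fun x hx => hx.1.2
  have hIccsub : Set.Icc (0:ℝ) T ⊆ Set.Icc (0:ℝ) A := Set.Icc_subset_Icc le_rfl hTA
  -- S is closed
  have hScl : IsClosed S := by
    rw [hS]
    have hrepr : {a ∈ Set.Icc (0:ℝ) T | ktil a ≤ ε} = Set.Icc 0 T ∩ ktil ⁻¹' Set.Iic ε := by
      ext x; simp [Set.mem_sep_iff, Set.mem_inter_iff]
    rw [hrepr]
    exact (hkc.mono hIccsub).preimage_isClosed_of_isClosed isClosed_Icc isClosed_Iic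
  have hSm : MeasurableSet S := hScl.measurableSet
  have hSfin : volume S ≠ ⊤ := by
    have hsub : S ⊆ Set.Icc 0 T := by rw [hS]; exact fun x hx => hx.1
    have hle : volume S ≤ volume (Set.Icc (0:ℝ) T) := measure_mono hsub
    have : volume (Set.Icc (0:ℝ) T) ≠ ⊤ := by
      rw [Real.volume_Icc]; exact ENNReal.ofReal_ne_top
    exact fun h => this (top_le_iff.mp (h ▸ hle))
  -- pointwise bound
  have hpt : ∀ a ∈ Set.Icc (0:ℝ) A, max (-(f a)) 0 ≤ Set.indicator S (fun _ => c) a := by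
    intro a ha
    rcases le_or_gt 0 (f a) with hfa | hfa
    · rw [max_eq_right (neg_nonpos.mpr hfa)]
      exact Set.indicator_nonneg (fun _ _ => hc0) a
    · have hkta : kt a < c * K a := by
        have : kt a - c * K a < 0 := hfa
        linarith
      have hKa : 0 < K a := by
        by_contra h
        push_neg at h
        have : c * K a ≤ 0 := mul_nonpos_of_nonneg_of_nonpos hc0 h
        linarith [hkt0 a]
      have haS : a ∈ S := by
        have hex : ∃ s ∈ Set.Icc a A, 0 < kt s := by
          by_contra h
          push_neg at h
          have hz : K a = 0 := by
            have hEz : Set.EqOn kt (fun _ => (0:ℝ)) (Set.uIcc a A) := by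
              rw [Set.uIcc_of_le ha.2]
              intro s hs
              exact le_antisymm (h s hs) (hkt0 s)
            have := integral_congr (μ := volume) (a := a) (b := A) hEz
            simpa [hKdef] using this
          linarith
        obtain ⟨s, hs, hspos⟩ := hex
        have hsIcc : s ∈ Set.Icc (0:ℝ) A := ⟨le_trans ha.1 hs.1, hs.2⟩
        have hsT : s ≤ T := by
          rw [hT]
          exact le_csSup hbdd ⟨hsIcc, by rwa [← heq s hsIcc]⟩
        have hKle : K a ≤ 1 := hK1 a ha
        have hktε : ktil a ≤ ε := by
          rw [← heq a ha]
          nlinarith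
        rw [hS]
        exact ⟨⟨ha.1, le_trans hs.1 hsT⟩, hktε⟩
      rw [Set.indicator_of_mem haS]
      have hKle : K a ≤ 1 := hK1 a ha
      have hmax : max (-(f a)) 0 = -(f a) := max_eq_left (by linarith)
      rw [hmax, hfdef]
      simp only
      nlinarith [hkt0 a]
  -- integrability
  have hmaxc : Continuous fun a => max (-(f a)) 0 := (hfc.neg).max continuous_const
  have hindI : IntervalIntegrable (S.indicator fun _ => c) volume 0 A := by
    rw [intervalIntegrable_iff_integrableOn_Ioc_of_le hA.le]
    rw [IntegrableOn, integrable_indicator_iff hSm]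
    apply (integrableOn_const_iff (by simp)).mpr
    right
    exact lt_of_le_of_lt (Measure.restrict_apply_le _ _) (lt_top_iff_ne_top.mpr hSfin)
  have hImono : (∫ a in (0:ℝ)..A, max (-(f a)) 0)
      ≤ ∫ a in (0:ℝ)..A, Set.indicator S (fun _ => c) a :=
    integral_mono_on hA.le (hmaxc.intervalIntegrable 0 A) hindI hpt
  have hIind : (∫ a in (0:ℝ)..A, Set.indicator S (fun _ => c) a)
      ≤ c * (volume S).toReal := by
    rw [intervalIntegral.integral_of_le hA.le, MeasureTheory.integral_indicator hSm,
      Measure.restrict_restrict hSm, setIntegral_const, smul_eq_mul]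
    have hmono : volume (S ∩ Set.Ioc 0 A) ≤ volume S := measure_mono Set.inter_subset_left
    have h1 : (volume (S ∩ Set.Ioc 0 A)).toReal ≤ (volume S).toReal :=
      ENNReal.toReal_mono hSfin hmono
    have h1' : volume.real (S ∩ Set.Ioc 0 A) ≤ (volume S).toReal := h1
    nlinarith
  -- split |f|
  have habs : ∀ x : ℝ, |x| = x + 2 * max (-x) 0 := by
    intro x
    rcases le_total 0 x with h | h
    · rw [abs_of_nonneg h, max_eq_right (neg_nonpos.mpr h)]; ring
    · rw [abs_of_nonpos h, max_eq_left (neg_nonneg.mpr h)]; ring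
  have hsplit : (∫ a in (0:ℝ)..A, |f a|)
      = (∫ a in (0:ℝ)..A, f a) + 2 * ∫ a in (0:ℝ)..A, max (-(f a)) 0 := by
    have h1 : (∫ a in (0:ℝ)..A, |f a|)
        = ∫ a in (0:ℝ)..A, (f a + 2 * max (-(f a)) 0) := by
      apply integral_congr
      intro x _
      exact habs (f x)
    rw [h1, intervalIntegral.integral_add (hfc.intervalIntegrable 0 A)
      ((show Continuous fun a => 2 * max (-(f a)) 0 from continuous_const.mul hmaxc).intervalIntegrable 0 A),
      intervalIntegral.integral_const_mul]
  have hintf : (∫ a in (0:ℝ)..A, f a) = 1 - lam := by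
    rw [hfdef]
    rw [intervalIntegral.integral_sub (hktc.intervalIntegrable 0 A)
      ((show Continuous fun a => c * K a from continuous_const.mul hKcont).intervalIntegrable 0 A),
      intervalIntegral.integral_const_mul, hKM, hmass', hcdef]
    have : r * lam * M = lam * (r * M) := by ring
    rw [this, hrM1, mul_one]
  rw [hLHS, hsplit, hintf]
  have : c * (volume S).toReal = r * lam * (volume S).toReal := by rw [hcdef]
  nlinarith [hImono, hIind]
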